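/- Let q = 3, m ≥ 4, and n = (3^m − 1)/2. For every i with 1 ≤ i ≤ ⌈m/4⌉, the i-th largest 3-cyclotomic coset leader modulo n is δ_i = 3^{m−1} − 1 − (3^{⌊(m−3)/2⌋ + i} − 1)/2. -/

import Mathlib

/-- The `q`-cyclotomic coset of `s` modulo `n`. -/
def cosetOf (q n s : ℕ) : Set ℕ := {t | ∃ j : ℕ, t = s * q ^ j % n}

/-- `s` is a coset leader: `s < n` and `s` is the smallest element of its coset. -/
def IsCosetLeader (q n s : ℕ) : Prop := s < n ∧ ∀ j : ℕ, s ≤ s * q ^ j % n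


-- 3^j mod (3^m - 1) cycles with period m
lemma pow3_cycle (m : ℕ) (j : ℕ) :
    (3:ℕ)^j ≡ 3^(j % m) [MOD 3^m - 1] := by
  conv_lhs => rw [← Nat.div_add_mod j m]
  rw [pow_add, pow_mul]
  have h1 : (3:ℕ)^m ≡ 1 [MOD 3^m - 1] := by
    have h : (3:ℕ)^m ≥ 1 := Nat.one_le_pow _ _ (by norm_num)
    have h2 : (3:ℕ)^m - 1 + 1 = 3^m := by omega
    unfold Nat.ModEq
    conv_lhs => rw [← h2]
    simp [Nat.add_mod]
  calc ((3:ℕ)^m)^(j/m) * 3^(j%m) ≡ 1^(j/m) * 3^(j%m) [MOD 3^m - 1] :=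
        Nat.ModEq.mul_right _ (h1.pow _)
    _ = 3^(j%m) := by ring

-- the rotation formula
lemma rot_eq (m : ℕ) (v j : ℕ) (hv : v < 3^m - 1) (hj : j ≤ m) :
    v * 3^j % (3^m - 1) = (v % 3^(m-j)) * 3^j + v / 3^(m-j) := by
  set a := m - j with ha
  have hpa : (0:ℕ) < 3^a := Nat.pow_pos (by norm_num)
  have hpj : (0:ℕ) < 3^j := Nat.pow_pos (by norm_num)
  have hM : (3:ℕ)^a * 3^j = 3^m := by rw [← pow_add]; congr 1; omega
  have hM' : (3:ℕ)^j * 3^a = 3^m := by rw [← pow_add]; congr 1; omega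
  have hM1 : (1:ℕ) ≤ 3^m := Nat.one_le_pow _ _ (by norm_num)
  set x := v / 3^a with hx
  set y := v % 3^a with hy
  have hvxy : x * 3^a + y = v := by rw [hx, hy, mul_comm]; exact Nat.div_add_mod v (3^a)
  have hylt : y < 3^a := Nat.mod_lt _ hpa
  have hxlt : x < 3^j := by
    rw [hx, Nat.div_lt_iff_lt_mul hpa, hM']
    omega
  have e1 : x * (3^m - 1) + x = x * 3^m := by
    rw [Nat.mul_sub, mul_one]
    have : x ≤ x * 3^m := Nat.le_mul_of_pos_right _ (by positivity)
    omega
  have key : v * 3^j = x * (3^m - 1) + (y * 3^j + x) := by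
    have k1 : v * 3^j = x * 3^m + y * 3^j := by
      rw [← hvxy, add_mul, mul_assoc, hM]
    omega
  have e5 : (3^a - 1) * 3^j = 3^m - 3^j := by rw [Nat.sub_mul, one_mul, hM]
  have hj3 : (3:ℕ)^j ≤ 3^m := Nat.pow_le_pow_right (by norm_num) hj
  have hy3 : y * 3^j ≤ 3^m - 3^j := by
    rw [← e5]; exact Nat.mul_le_mul_right _ (by omega)
  have hyx : y * 3^j + x < 3^m - 1 := by
    by_contra hc
    have hx' : x = 3^j - 1 := by omega
    have hy' : y * 3^j = (3^a - 1) * 3^j := by rw [e5]; omega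
    have hy'' : y = 3^a - 1 := Nat.eq_of_mul_eq_mul_right hpj hy'
    have hva : x * 3^a = 3^m - 3^a := by rw [hx', Nat.sub_mul, one_mul, hM']
    have hpa3 : (3:ℕ)^a ≤ 3^m := Nat.pow_le_pow_right (by norm_num) (by omega)
    omega
  rw [key, Nat.add_comm, Nat.add_mul_mod_self_right, Nat.mod_eq_of_lt hyx]

lemma comp_rot (m : ℕ) (hm : 1 ≤ m) (v j : ℕ) (hv1 : 1 ≤ v) (hv2 : v < 3^m - 1) :
    (3^m - 1 - v) * 3^j % (3^m - 1) = (3^m - 1) - v * 3^j % (3^m - 1) := by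
  set N := (3:ℕ)^m - 1 with hN
  have h3m : (3:ℕ) ≤ 3^m := by
    calc (3:ℕ) = 3^1 := by norm_num
      _ ≤ 3^m := Nat.pow_le_pow_right (by norm_num) hm
  have hNpos : 0 < N := by omega
  set r := v * 3^j % N with hr
  have hrlt : r < N := Nat.mod_lt _ hNpos
  have hrpos : 0 < r := by
    rcases Nat.eq_zero_or_pos r with h | h
    · exfalso
      have hdvd : N ∣ v * 3^j := Nat.dvd_of_mod_eq_zero h
      have hN3 : ¬ (3 ∣ N) := by
        have h1 : (3:ℕ)^m % 3 = 0 := by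
          have h2 : (3:ℕ)^m = 3 * 3^(m-1) := by rw [← pow_succ']; congr 1; omega
          omega
        omega
      have hcop : Nat.Coprime N (3^j) :=
        Nat.Coprime.pow_right _ (Nat.coprime_comm.mp
          ((Nat.prime_three.coprime_iff_not_dvd).mpr hN3))
      have hd : N ∣ v := hcop.dvd_of_dvd_mul_right hdvd
      have := Nat.le_of_dvd (by omega) hd
      omega
    · exact h
  set b := (N - v) * 3^j % N with hb
  have hblt : b < N := Nat.mod_lt _ hNpos
  have hsplit : (N - v) * 3^j + v * 3^j = N * 3^j := by rw [← add_mul]; congr 1; omega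
  have hsum : (b + r) % N = 0 := by
    rw [hb, hr, ← Nat.add_mod, hsplit, Nat.mul_mod_right]
  obtain ⟨c, hc⟩ := Nat.dvd_of_mod_eq_zero hsum
  have hble : b + r = N := by
    rcases c with _ | c
    · simp at hc; omega
    · rcases c with _ | c
      · simpa using hc
      · exfalso
        have h2 : N * 2 ≤ N * (c + 1 + 1) := Nat.mul_le_mul_left _ (by omega)
        have h3 : N * 2 = N + N := by ring
        omega
  omega

lemma leader_iff (m n : ℕ) (hm : 1 ≤ m) (hn : n = (3^m - 1)/2) (s : ℕ)
    (hs1 : 1 ≤ s) (hs2 : s < n) :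
    IsCosetLeader 3 n s ↔ ∀ j, (3^m - 1 - 2*s) * 3^j % (3^m - 1) ≤ 3^m - 1 - 2*s := by
  set N := (3:ℕ)^m - 1 with hN
  have h3m : (3:ℕ) ≤ 3^m := by
    calc (3:ℕ) = 3^1 := by norm_num
      _ ≤ 3^m := Nat.pow_le_pow_right (by norm_num) hm
  have hodd : (3:ℕ)^m % 2 = 1 := by rw [Nat.pow_mod]; norm_num
  have h2n : 2 * n = N := by omega
  have hnpos : 0 < n := by omega
  have key : ∀ j, (s ≤ s * 3^j % n ↔ (N - 2*s) * 3^j % N ≤ N - 2*s) := by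
    intro j
    have hdouble : (2*s) * 3^j % N = 2 * (s * 3^j % n) := by
      rw [← h2n]
      have h : 2*s*3^j = 2*(s*3^j) := by ring
      rw [h, Nat.mul_mod_mul_left]
    have hcomp : (N - 2*s) * 3^j % N = N - (2*s)*3^j % N :=
      comp_rot m hm (2*s) j (by omega) (by omega)
    have hmlt : s * 3^j % n < n := Nat.mod_lt _ hnpos
    rw [hcomp, hdouble]
    omega
  constructor
  · rintro ⟨-, h⟩ j
    exact (key j).mp (h j)
  · intro h
    exact ⟨hs2, fun j => (key j).mpr (h j)⟩

lemma maxrot_two (m P : ℕ) (hm : 2 ≤ m) (hP1 : m ≤ 2*P + 2) (hP2 : P ≤ m - 2) :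
    ∀ j, (3^(m-1) + 3^P) * 3^j % (3^m - 1) ≤ 3^(m-1) + 3^P := by
  intro j
  set v := (3:ℕ)^(m-1) + 3^P with hv
  have hm1 : (3:ℕ)^(m-1) * 3 = 3^m := by rw [← pow_succ]; congr 1; omega
  have hm2 : (3:ℕ)^(m-2) * 3 = 3^(m-1) := by rw [← pow_succ]; congr 1; omega
  have hPle : (3:ℕ)^P ≤ 3^(m-2) := Nat.pow_le_pow_right (by norm_num) hP2
  have hPpos : (0:ℕ) < 3^P := Nat.pow_pos (by norm_num)
  have hm2pos : (0:ℕ) < 3^(m-2) := Nat.pow_pos (by norm_num)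
  have hvN : v < 3^m - 1 := by rw [hv]; omega
  have hred : v * 3^j % (3^m - 1) = v * 3^(j % m) % (3^m - 1) :=
    (pow3_cycle m j).mul_left v
  rw [hred]
  set i := j % m with hi
  have him : i < m := Nat.mod_lt _ (by omega)
  rw [rot_eq m v i hvN (le_of_lt him)]
  rcases Nat.eq_zero_or_pos i with hi0 | hipos
  · rw [hi0, Nat.sub_zero]
    have h1 : v % 3^m = v := Nat.mod_eq_of_lt (by omega)
    have h2 : v / 3^m = 0 := Nat.div_eq_of_lt (by omega)
    rw [h1, h2]
    simp
  set a := m - i with ha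
  have haa : 1 ≤ a ∧ a ≤ m - 1 := by omega
  have hapos : (0:ℕ) < 3^a := Nat.pow_pos (by norm_num)
  rcases Nat.lt_or_ge P a with hPa | hPa
  · -- P < a : v % 3^a = 3^P, v / 3^a = 3^(m-1-a)
    have hsplit : (3:ℕ)^(m-1) = 3^a * 3^(m-1-a) := by rw [← pow_add]; congr 1; omega
    have hPa3 : (3:ℕ)^P < 3^a := Nat.pow_lt_pow_right (by norm_num) hPa
    have hvmod : v % 3^a = 3^P := by
      rw [hv, hsplit, add_comm, Nat.add_mul_mod_self_left, Nat.mod_eq_of_lt hPa3]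
    have hvdiv : v / 3^a = 3^(m-1-a) := by
      rw [hv, hsplit, add_comm, Nat.add_mul_div_left _ _ hapos,
        Nat.div_eq_of_lt hPa3]
      omega
    rw [hvmod, hvdiv, ← pow_add]
    have hPi : P + i ≤ m - 1 := by omega
    rcases Nat.lt_or_ge (P + i) (m-1) with hc | hc
    · have b1 : (3:ℕ)^(P+i) ≤ 3^(m-2) := Nat.pow_le_pow_right (by norm_num) (by omega)
      have b2 : (3:ℕ)^(m-1-a) ≤ 3^(m-2) := Nat.pow_le_pow_right (by norm_num) (by omega)
      omega
    · have hc' : P + i = m - 1 := by omega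
      have hia : m - 1 - a = m - 2 - P := by omega
      have b2 : (3:ℕ)^(m-1-a) ≤ 3^P := by
        rw [hia]; exact Nat.pow_le_pow_right (by norm_num) (by omega)
      rw [hc']
      omega
  · -- a ≤ P : v % 3^a = 0, v / 3^a = 3^(m-1-a) + 3^(P-a)
    have hsplit : v = 3^a * (3^(m-1-a) + 3^(P-a)) := by
      rw [hv, mul_add, ← pow_add, ← pow_add]
      congr 2 <;> omega
    have hvmod : v % 3^a = 0 := by rw [hsplit, Nat.mul_mod_right]
    have hvdiv : v / 3^a = 3^(m-1-a) + 3^(P-a) := by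
      rw [hsplit, Nat.mul_div_cancel_left _ hapos]
    rw [hvmod, hvdiv]
    have b1 : (3:ℕ)^(m-1-a) ≤ 3^(m-2) := Nat.pow_le_pow_right (by norm_num) (by omega)
    have b2 : (3:ℕ)^(P-a) ≤ 3^(m-2) := Nat.pow_le_pow_right (by norm_num) (by omega)
    omega

lemma mod_pow_add (c t r : ℕ) (hr : r < 3^c) : ((3:ℕ)^c * t + r) % 3^c = r := by
  rw [Nat.mul_add_mod]
  exact Nat.mod_eq_of_lt hr

lemma pow3_odd (e : ℕ) : (3:ℕ)^e % 2 = 1 := by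
  rw [Nat.pow_mod]; simp

lemma maxrot_classify (m P v : ℕ) (hm : 4 ≤ m) (hP : 4*P + 1 ≤ 3*m) (hP1 : 1 ≤ P)
    (hve : v % 2 = 0) (hv2 : 2 ≤ v) (hvlt : v < 3^(m-1) + 3^P)
    (hrot : ∀ j, v * 3^j % (3^m - 1) ≤ v) :
    ∃ q, m ≤ 2*q + 2 ∧ q < P ∧ v = 3^(m-1) + 3^q := by
  have hPm : P ≤ m - 2 := by omega
  have hm1 : (3:ℕ)^(m-1) * 3 = 3^m := by rw [← pow_succ]; congr 1; omega
  have hm2 : (3:ℕ)^(m-2) * 3 = 3^(m-1) := by rw [← pow_succ]; congr 1; omega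
  have hPle : (3:ℕ)^P ≤ 3^(m-2) := Nat.pow_le_pow_right (by norm_num) hPm
  have hPpos : (0:ℕ) < 3^P := Nat.pow_pos (by norm_num)
  have hm2pos : (0:ℕ) < 3^(m-2) := Nat.pow_pos (by norm_num)
  have hvN : v < 3^m - 1 := by omega
  have hE : ∀ d, d ≤ m-1 → (v % 3^(d+1)) * 3^(m-1-d) + v / 3^(d+1) ≤ v := by
    intro d hd
    have h := hrot (m-1-d)
    rw [rot_eq m v (m-1-d) hvN (by omega)] at h
    have hme : m - (m-1-d) = d+1 := by omega
    rw [hme] at h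
    exact h
  -- Step 1 : 3^(m-1) ≤ v
  have hvtop : (3:ℕ)^(m-1) ≤ v := by
    set d := Nat.log 3 v with hd
    have hd1 : (3:ℕ)^d ≤ v := Nat.pow_log_le_self 3 (by omega)
    have hd2 : v < 3^(d+1) := Nat.lt_pow_succ_log_self (by norm_num) v
    have hdm : d ≤ m - 1 := by
      have h1 : (3:ℕ)^d < 3^m := lt_of_le_of_lt hd1 (by omega)
      have := (Nat.pow_lt_pow_iff_right (by norm_num : 1 < 3)).mp h1
      omega
    have h := hE d hdm
    rw [Nat.mod_eq_of_lt hd2] at h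
    have hge : (3:ℕ)^(m-1) ≤ v * 3^(m-1-d) := by
      calc (3:ℕ)^(m-1) = 3^d * 3^(m-1-d) := by rw [← pow_add]; congr 1; omega
        _ ≤ v * 3^(m-1-d) := Nat.mul_le_mul_right _ hd1
    generalize hD : v / 3^(d+1) = D at h
    omega
  set w := v - 3^(m-1) with hwdef
  have hvw : v = 3^(m-1) + w := by omega
  have hwP : w < 3^P := by omega
  -- no digit of v below position m-1 equals 2
  have htwo : ∀ d, d ≤ m - 2 → v % 3^(d+1) < 2 * 3^d := by
    intro d hd
    by_contra hc
    push_neg at hc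
    have h := hE d (by omega)
    have hge : 2 * 3^(m-1) ≤ (v % 3^(d+1)) * 3^(m-1-d) := by
      calc 2 * (3:ℕ)^(m-1) = (2 * 3^d) * 3^(m-1-d) := by
            rw [mul_assoc, ← pow_add]; congr 2; omega
        _ ≤ _ := Nat.mul_le_mul_right _ hc
    generalize hD : v / 3^(d+1) = D at h
    generalize hR : (v % 3^(d+1)) * 3^(m-1-d) = R at h hge
    omega
  rcases Nat.eq_zero_or_pos w with hw0 | hwpos
  · -- w = 0 : v = 3^(m-1), odd, contradiction
    exfalso
    have := pow3_odd (m-1)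
    omega
  -- extract top bit q1 of w
  set q1 := Nat.log 3 w with hq1def
  have hq1a : (3:ℕ)^q1 ≤ w := Nat.pow_log_le_self 3 (by omega)
  have hq1b : w < 3^(q1+1) := Nat.lt_pow_succ_log_self (by norm_num) w
  have hq1P : q1 < P := by
    have h1 : (3:ℕ)^q1 < 3^P := lt_of_le_of_lt hq1a hwP
    exact (Nat.pow_lt_pow_iff_right (by norm_num : 1 < 3)).mp h1
  have hmodq1 : v % 3^(q1+1) = w := by
    have hsp : (3:ℕ)^(m-1) = 3^(q1+1) * 3^(m-2-q1) := by
      rw [← pow_add]; congr 1; omega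
    rw [hvw, hsp]
    exact mod_pow_add _ _ _ hq1b
  have hwle : w < 2 * 3^q1 := by
    have h := htwo q1 (by omega)
    rw [hmodq1] at h
    exact h
  set w1 := w - 3^q1 with hw1def
  have hww1 : w = 3^q1 + w1 := by omega
  have hw1lt : w1 < 3^q1 := by omega
  -- wrap bound : bit set at position d gives 3^(m-1) + 3^(m-2-d) ≤ v
  have hwrap : ∀ d, d ≤ m - 2 → 3^d ≤ v % 3^(d+1) →
      3^(m-1) + 3^(m-2-d) ≤ v := by
    intro d hd hbit
    have h := hE d (by omega)
    have hge1 : (3:ℕ)^(m-1) ≤ (v % 3^(d+1)) * 3^(m-1-d) := by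
      calc (3:ℕ)^(m-1) = 3^d * 3^(m-1-d) := by rw [← pow_add]; congr 1; omega
        _ ≤ _ := Nat.mul_le_mul_right _ hbit
    have hge2 : (3:ℕ)^(m-2-d) ≤ v / 3^(d+1) := by
      have h1 : (3:ℕ)^(m-1) / 3^(d+1) ≤ v / 3^(d+1) := Nat.div_le_div_right hvtop
      have h2 : (3:ℕ)^(m-1) / 3^(d+1) = 3^(m-2-d) := by
        rw [Nat.pow_div (by omega) (by norm_num)]; congr 1; omega
      rw [h2] at h1
      exact h1
    generalize hD : v / 3^(d+1) = D at h hge2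
    generalize hR : (v % 3^(d+1)) * 3^(m-1-d) = R at h hge1
    omega
  rcases Nat.eq_zero_or_pos w1 with hw10 | hw1pos
  · -- single bit : v = 3^(m-1) + 3^q1
    have hwq : w = 3^q1 := by omega
    have h := hwrap q1 (by omega) (by rw [hmodq1, hwq])
    have h2 : (3:ℕ)^(m-2-q1) ≤ 3^q1 := by
      rw [hvw, hwq] at h
      omega
    have h3 : m-2-q1 ≤ q1 := (Nat.pow_le_pow_iff_right (by norm_num : 1 < 3)).mp h2
    exact ⟨q1, by omega, hq1P, by rw [hvw, hwq]⟩
  -- extract second bit q2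
  set q2 := Nat.log 3 w1 with hq2def
  have hq2a : (3:ℕ)^q2 ≤ w1 := Nat.pow_log_le_self 3 (by omega)
  have hq2b : w1 < 3^(q2+1) := Nat.lt_pow_succ_log_self (by norm_num) w1
  have hq2q1 : q2 < q1 := by
    have h1 : (3:ℕ)^q2 < 3^q1 := lt_of_le_of_lt hq2a hw1lt
    exact (Nat.pow_lt_pow_iff_right (by norm_num : 1 < 3)).mp h1
  have hmodq2 : v % 3^(q2+1) = w1 := by
    have hsp : v = 3^(q2+1) * (3^(m-2-q2) + 3^(q1-1-q2)) + w1 := by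
      rw [hvw, hww1, mul_add, ← pow_add, ← pow_add, ← add_assoc]
      congr 3 <;> omega
    rw [hsp]
    exact mod_pow_add _ _ _ hq2b
  have hw1le : w1 < 2 * 3^q2 := by
    have h := htwo q2 (by omega)
    rw [hmodq2] at h
    exact h
  set w2 := w1 - 3^q2 with hw2def
  have hww2 : w1 = 3^q2 + w2 := by omega
  have hw2lt : w2 < 3^q2 := by omega
  rcases Nat.eq_zero_or_pos w2 with hw20 | hw2pos
  · -- exactly three bits : v odd, contradiction
    exfalso
    have h1 := pow3_odd (m-1)
    have h2 := pow3_odd q1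
    have h3 := pow3_odd q2
    omega
  -- extract third bit q3
  set q3 := Nat.log 3 w2 with hq3def
  have hq3a : (3:ℕ)^q3 ≤ w2 := Nat.pow_log_le_self 3 (by omega)
  have hq3b : w2 < 3^(q3+1) := Nat.lt_pow_succ_log_self (by norm_num) w2
  have hq3q2 : q3 < q2 := by
    have h1 : (3:ℕ)^q3 < 3^q2 := lt_of_le_of_lt hq3a hw2lt
    exact (Nat.pow_lt_pow_iff_right (by norm_num : 1 < 3)).mp h1
  have hmodq3 : v % 3^(q3+1) = w2 := by
    have hsp : v = 3^(q3+1) * (3^(m-2-q3) + 3^(q1-1-q3) + 3^(q2-1-q3)) + w2 := by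
      rw [hvw, hww1, hww2, mul_add, mul_add, ← pow_add, ← pow_add, ← pow_add]
      have e1 : q3 + 1 + (m-2-q3) = m - 1 := by omega
      have e2 : q3 + 1 + (q1-1-q3) = q1 := by omega
      have e3 : q3 + 1 + (q2-1-q3) = q2 := by omega
      rw [e1, e2, e3]
      ring
    rw [hsp]
    exact mod_pow_add _ _ _ hq3b
  exfalso
  have hq13 : (2:ℕ) * 3^q1 < 3^(q1+1) := by
    have h : (3:ℕ)^(q1+1) = 3^q1 * 3 := pow_succ 3 q1
    have hp : (0:ℕ) < 3^q1 := Nat.pow_pos (by norm_num)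
    omega
  have hvlt2 : v < 3^(m-1) + 2 * 3^q1 := by omega
  -- gap inequality : bit at d with next bit e
  have hgap : ∀ d e r', d ≤ m - 2 → e < d → v % 3^(d+1) = 3^d + 3^e + r' →
      e + (m-1-d) ≤ q1 := by
    intro d e r' hd hed hmod
    have h := hE d (by omega)
    have hge : (3:ℕ)^(m-1) + 3^(e + (m-1-d)) ≤ (v % 3^(d+1)) * 3^(m-1-d) := by
      calc (3:ℕ)^(m-1) + 3^(e + (m-1-d)) = (3^d + 3^e) * 3^(m-1-d) := by
            rw [add_mul, ← pow_add, ← pow_add]; congr 2; omega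
        _ ≤ (v % 3^(d+1)) * 3^(m-1-d) := Nat.mul_le_mul_right _ (by rw [hmod]; omega)
    have hlt : (3:ℕ)^(e + (m-1-d)) < 3^(q1+1) := by
      generalize hD : v / 3^(d+1) = D at h
      generalize hR : (v % 3^(d+1)) * 3^(m-1-d) = R at h hge
      omega
    have := (Nat.pow_lt_pow_iff_right (by norm_num : 1 < 3)).mp hlt
    omega
  have hgap1 : q2 + (m-1-q1) ≤ q1 := by
    apply hgap q1 q2 w2 (by omega) hq2q1
    rw [hmodq1, hww1, hww2]
    ring
  have hgap2 : q3 + (m-1-q2) ≤ q1 := by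
    apply hgap q2 q3 (w2 - 3^q3) (by omega) hq3q2
    rw [hmodq2, hww2]
    omega
  have hgap3 : m - 2 - q3 ≤ q1 := by
    have h := hwrap q3 (by omega) (by rw [hmodq3]; omega)
    have h3 : (3:ℕ)^(m-2-q3) < 3^(q1+1) := by omega
    have := (Nat.pow_lt_pow_iff_right (by norm_num : 1 < 3)).mp h3
    omega
  omega


lemma half_id (A B s M : ℕ) (hM : M = 3*A) (hA : A % 2 = 1) (hB : B % 2 = 1)
    (hBA : B ≤ A) (h : M - 1 - 2*s = A + B) (hs : 2*s ≤ M) :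
    A - 1 - (B-1)/2 = s := by omega

lemma half_inj (A B1 B2 : ℕ) (h1 : B1 % 2 = 1) (h2 : B2 % 2 = 1) (hB1 : 1 ≤ B1) (hB2 : 1 ≤ B2)
    (hA1 : B1 ≤ A) (hA2 : B2 ≤ A)
    (h : A - 1 - (B1-1)/2 = A - 1 - (B2-1)/2) : B1 = B2 := by omega


/-- `δi` is the `i`-th largest coset leader: it is a coset leader and exactly
`i - 1` coset leaders exceed it. -/
theorem stmt4 (m n : ℕ) (hm : 4 ≤ m) (hn : n = (3 ^ m - 1) / 2)
    (i : ℕ) (hi1 : 1 ≤ i) (hi2 : i ≤ (m + 3) / 4)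
    (δi : ℕ) (hδi : δi = 3 ^ (m - 1) - 1 - (3 ^ ((m - 3) / 2 + i) - 1) / 2) :
    IsCosetLeader 3 n δi ∧
      Set.ncard {s : ℕ | IsCosetLeader 3 n s ∧ δi < s} = i - 1 := by
  set P := (m - 3) / 2 + i with hPdef
  have hP4 : 4 * P + 1 ≤ 3 * m := by omega
  have hPm : P ≤ m - 2 := by omega
  have hP1 : 1 ≤ P := by omega
  have hm1 : (3:ℕ)^(m-1) * 3 = 3^m := by rw [← pow_succ]; congr 1; omega
  have hm2 : (3:ℕ)^(m-2) * 3 = 3^(m-1) := by rw [← pow_succ]; congr 1; omega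
  have hPle : (3:ℕ)^P ≤ 3^(m-2) := Nat.pow_le_pow_right (by norm_num) hPm
  have hPpos : (0:ℕ) < 3^P := Nat.pow_pos (by norm_num)
  have hm2pos : (0:ℕ) < 3^(m-2) := Nat.pow_pos (by norm_num)
  have hModd := pow3_odd m
  have hAodd := pow3_odd (m-1)
  have hPodd := pow3_odd P
  have h2n : 2 * n = 3^m - 1 := by omega
  have hδkey : 2 * δi + 3^(m-1) + 3^P = 3^m - 1 := by rw [hδi]; omega
  have hδpos : 1 ≤ δi := by omega
  have hδn : δi < n := by omega
  have hlead_i : IsCosetLeader 3 n δi := by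
    rw [leader_iff m n (by omega) hn δi hδpos hδn]
    have hveq : 3^m - 1 - 2*δi = 3^(m-1) + 3^P := by omega
    rw [hveq]
    exact maxrot_two m P (by omega) (by omega) hPm
  refine ⟨hlead_i, ?_⟩
  have hset : {s : ℕ | IsCosetLeader 3 n s ∧ δi < s}
      = (fun j => 3^(m-1) - 1 - (3^((m-3)/2 + j) - 1)/2) '' Set.Ico 1 i := by
    ext s
    simp only [Set.mem_setOf_eq, Set.mem_image, Set.mem_Ico]
    constructor
    · rintro ⟨hlead, hgt⟩
      have hsn : s < n := hlead.1
      have hs1 : 1 ≤ s := by omega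
      have hrot := (leader_iff m n (by omega) hn s hs1 hsn).mp hlead
      obtain ⟨q, hq1, hq2, hq3⟩ := maxrot_classify m P (3^m - 1 - 2*s) hm hP4 hP1
        (by omega) (by omega) (by omega) hrot
      have hqle : (3:ℕ)^q ≤ 3^(m-2) := Nat.pow_le_pow_right (by norm_num) (by omega)
      have hqodd := pow3_odd q
      refine ⟨q - (m-3)/2, ⟨by omega, by omega⟩, ?_⟩
      have he : (m-3)/2 + (q - (m-3)/2) = q := by omega
      rw [he]
      refine half_id _ _ _ (3^m) (by omega) hAodd hqodd (by omega) hq3 (by omega)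
    · rintro ⟨j, ⟨hj1, hj2⟩, rfl⟩
      have hKj : (m-3)/2 + j ≤ m - 2 := by omega
      have hBle : (3:ℕ)^((m-3)/2+j) ≤ 3^(m-2) := Nat.pow_le_pow_right (by norm_num) hKj
      have hBP : (3:ℕ)^((m-3)/2+j) < 3^P := Nat.pow_lt_pow_right (by norm_num) (by omega)
      have hBodd := pow3_odd ((m-3)/2+j)
      have hBpos : (0:ℕ) < 3^((m-3)/2+j) := Nat.pow_pos (by norm_num)
      have hδjkey : 2 * (3^(m-1) - 1 - (3^((m-3)/2 + j) - 1)/2) + 3^(m-1) + 3^((m-3)/2+j)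
          = 3^m - 1 := by omega
      constructor
      · rw [leader_iff m n (by omega) hn _ (by omega) (by omega)]
        have hveq : 3^m - 1 - 2*(3^(m-1) - 1 - (3^((m-3)/2 + j) - 1)/2)
            = 3^(m-1) + 3^((m-3)/2+j) := by omega
        rw [hveq]
        exact maxrot_two m ((m-3)/2+j) (by omega) (by omega) hKj
      · omega
  rw [hset]
  rw [Set.ncard_image_of_injOn, ← Finset.coe_Ico, Set.ncard_coe_finset, Nat.card_Ico]
  intro j1 hj1 j2 hj2 heq
  simp only [Set.mem_Ico] at hj1 hj2
  dsimp only at heq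
  have hle1 : (3:ℕ)^((m-3)/2+j1) ≤ 3^(m-2) := Nat.pow_le_pow_right (by norm_num) (by omega)
  have hle2 : (3:ℕ)^((m-3)/2+j2) ≤ 3^(m-2) := Nat.pow_le_pow_right (by norm_num) (by omega)
  have ho1 := pow3_odd ((m-3)/2+j1)
  have ho2 := pow3_odd ((m-3)/2+j2)
  have hp1 : (0:ℕ) < 3^((m-3)/2+j1) := Nat.pow_pos (by norm_num)
  have hp2 : (0:ℕ) < 3^((m-3)/2+j2) := Nat.pow_pos (by norm_num)
  have hBeq : (3:ℕ)^((m-3)/2+j1) = 3^((m-3)/2+j2) :=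
    half_inj (3^(m-1)) _ _ ho1 ho2 hp1 hp2 (by omega) (by omega) heq
  have := Nat.pow_right_injective (by norm_num : 2 ≤ 3) hBeq
  omega
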